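/- arXiv:2106.03668 — 4 statements merged into one kernel-verified Lean document; each statement's English description precedes it below -/
import Mathlib

section
/- Let T = D ∘ S where D, S: ℝⁿ → ℝⁿ, suppose Fix(D) ∩ Fix(S) is nonempty, and suppose T is a contraction with constant λ ∈ (0,1) over the range Im(D) of D (i.e., ‖T(x) - T(z)‖ ≤ λ‖x - z‖ for all x, z ∈ Im(D)). If moreover Fix(D) ∩ Fix(S) ⊆ Im(D), then Fix(T) ∩ Im(D) = Fix(D) ∩ Fix(S). -/
/-- Fixed points of a composition `T = D ∘ S` that is a contraction over `Im(D)`: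
if `Fix(D) ∩ Fix(S)` is nonempty and contained in `Im(D)`, then
`Fix(T) ∩ Im(D) = Fix(D) ∩ Fix(S)`. -/
theorem fixedPoints_comp_contraction {n : ℕ}
    (D S : EuclideanSpace ℝ (Fin n) → EuclideanSpace ℝ (Fin n))
    (hne : ({x | D x = x} ∩ {x | S x = x}).Nonempty)
    (lam : ℝ) (hlam0 : 0 < lam) (hlam1 : lam < 1)
    (hcontr : ∀ x ∈ Set.range D, ∀ z ∈ Set.range D,
      ‖D (S x) - D (S z)‖ ≤ lam * ‖x - z‖)
    (hsub : ({x | D x = x} ∩ {x | S x = x}) ⊆ Set.range D) :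
    {x | D (S x) = x} ∩ Set.range D = {x | D x = x} ∩ {x | S x = x} := by
  obtain ⟨y, hyD, hyS⟩ := hne
  have hyR : y ∈ Set.range D := hsub ⟨hyD, hyS⟩
  have hTy : D (S y) = y := by rw [hyS]; exact hyD
  ext x
  constructor
  · rintro ⟨hTx, hxR⟩
    have h := hcontr x hxR y hyR
    rw [hTx, hTy] at h
    have : ‖x - y‖ ≤ 0 := by nlinarith [norm_nonneg (x - y)]
    have hxy : x = y := by
      have := le_antisymm this (norm_nonneg _)
      rwa [norm_sub_eq_zero_iff] at this
    exact hxy ▸ ⟨hyD, hyS⟩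
  · rintro ⟨hxD, hxS⟩
    refine ⟨?_, ⟨x, hxD⟩⟩
    show D (S x) = x
    rw [hxS]; exact hxD
end

section
/- Let g: ℝⁿ → ℝ be convex and differentiable with λ-Lipschitz gradient, D: ℝⁿ → ℝⁿ nonexpansive with residual R = I - D, and τ > 0. Define G = ∇g + τR. If there exists z ∈ ℝⁿ with ∇g(z) = 0 and R(z) = 0, then for any x ∈ ℝⁿ, G(x) = 0 implies ∇g(x) = 0 and R(x) = 0. Consequently Zer(G) = Zer(∇g) ∩ Zer(R). -/
open RealInnerProductSpace

set_option maxHeartbeats 1000000 in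
lemma grad_inner_le_sub {F : Type*} [NormedAddCommGroup F] [InnerProductSpace ℝ F] [CompleteSpace F]
    (g : F → ℝ) (hg : Differentiable ℝ g) (hconv : ConvexOn ℝ Set.univ g)
    (x y : F) : ⟪gradient g x, y - x⟫ ≤ g y - g x := by
  set v := y - x with hv
  have hline : ∀ t : ℝ, x + t • v = (AffineMap.lineMap x y : ℝ →ᵃ[ℝ] F) t := by
    intro t
    simp [AffineMap.lineMap_apply, hv]
    module
  have hφconv : ConvexOn ℝ Set.univ (fun t : ℝ => g (x + t • v)) := by
    have := hconv.comp_affineMap (AffineMap.lineMap x y : ℝ →ᵃ[ℝ] F)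
    have hpre : (AffineMap.lineMap x y : ℝ →ᵃ[ℝ] F) ⁻¹' Set.univ = Set.univ := by simp
    rw [hpre] at this
    have hfun : (fun t : ℝ => g (x + t • v)) = g ∘ (AffineMap.lineMap x y : ℝ →ᵃ[ℝ] F) := by
      funext t
      simp [Function.comp, hline t]
    rw [hfun]; exact this
  have hfd : HasFDerivAt g (InnerProductSpace.toDual ℝ F (gradient g x)) x :=
    ((hg x).hasGradientAt).hasFDerivAt
  have hd : HasDerivAt (fun t : ℝ => g (x + t • v)) ⟪gradient g x, v⟫ 0 := by
    have hl : HasDerivAt (fun t : ℝ => x + t • v) v 0 := by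
      simpa using ((hasDerivAt_id (0:ℝ)).smul_const v).const_add x
    have hfd' : HasFDerivAt g (InnerProductSpace.toDual ℝ F (gradient g x))
        ((fun t : ℝ => x + t • v) 0) := by simpa using hfd
    have := hfd'.comp_hasDerivAt 0 hl
    simpa [InnerProductSpace.toDual_apply_apply, Function.comp_def] using this
  have hslope := hφconv.le_slope_of_hasDerivAt (Set.mem_univ (0:ℝ)) (Set.mem_univ (1:ℝ))
    one_pos hd
  have : slope (fun t : ℝ => g (x + t • v)) 0 1 = g y - g x := by
    simp [slope_def_field, hv]
  rw [this] at hslope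
  exact hslope

/-- Zeros of the RED operator `G = ∇g + τR`: if `∇g` and `R = I - D` have a common zero,
`g` is convex with Lipschitz gradient, and `D` is nonexpansive, then any zero of `G` is a
common zero of `∇g` and `R`; hence `Zer(G) = Zer(∇g) ∩ Zer(R)`. -/
theorem red_zeros_eq_common_zeros {n : ℕ}
    (g : EuclideanSpace ℝ (Fin n) → ℝ) (hg : Differentiable ℝ g)
    (hconv : ConvexOn ℝ Set.univ g)
    (lam : ℝ) (hlam : 0 < lam)
    (hLip : ∀ x z, ‖gradient g x - gradient g z‖ ≤ lam * ‖x - z‖)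
    (D : EuclideanSpace ℝ (Fin n) → EuclideanSpace ℝ (Fin n))
    (hD : ∀ x z, ‖D x - D z‖ ≤ ‖x - z‖)
    (R : EuclideanSpace ℝ (Fin n) → EuclideanSpace ℝ (Fin n))
    (hR : ∀ x, R x = x - D x)
    (τ : ℝ) (hτ : 0 < τ)
    (z : EuclideanSpace ℝ (Fin n)) (hzg : gradient g z = 0) (hzR : R z = 0) :
    (∀ x, gradient g x + τ • R x = 0 → gradient g x = 0 ∧ R x = 0) ∧
    {x | gradient g x + τ • R x = 0} = {x | gradient g x = 0} ∩ {x | R x = 0} := by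
  have key : ∀ x, gradient g x + τ • R x = 0 → gradient g x = 0 ∧ R x = 0 := by
    intro x hx
    -- monotonicity of the gradient (using gradient g z = 0)
    have hmono : (0:ℝ) ≤ ⟪gradient g x, x - z⟫ := by
      have ha : ⟪gradient g x, z - x⟫ ≤ g z - g x := grad_inner_le_sub g hg hconv x z
      have hb : ⟪gradient g z, x - z⟫ ≤ g x - g z := grad_inner_le_sub g hg hconv z x
      rw [hzg] at hb
      simp only [inner_zero_left] at hb
      have hneg : ⟪gradient g x, x - z⟫ = -⟪gradient g x, z - x⟫ := by
        rw [← inner_neg_right]; congr 1; abel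
      linarith
    -- cocoercivity of R
    have hcoco : (1/2 : ℝ) * ‖R x‖^2 ≤ ⟪R x, x - z⟫ := by
      have hDxz : ‖D x - D z‖ ≤ ‖x - z‖ := hD x z
      have hDx : D x = x - R x := by rw [hR x]; abel
      have hDz : D z = z - R z := by rw [hR z]; abel
      have hRz : R z = 0 := hzR
      have heq : D x - D z = (x - z) - R x := by
        rw [hDx, hDz, hRz]; abel
      have hsq : ‖(x - z) - R x‖^2 ≤ ‖x - z‖^2 := by
        rw [← heq]
        exact pow_le_pow_left₀ (norm_nonneg _) hDxz 2
      have hexp : ‖(x - z) - R x‖^2 = ‖x - z‖^2 - 2 * ⟪x - z, R x⟫ + ‖R x‖^2 := by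
        rw [@norm_sub_sq_real]
      have hsymm : ⟪x - z, R x⟫ = ⟪R x, x - z⟫ := real_inner_comm _ _
      nlinarith [hsq, hexp, hsymm]
    -- combine: 0 = ⟪G x, x - z⟫ ≥ τ/2 ‖R x‖²
    have hGz : ⟪gradient g x + τ • R x, x - z⟫ = (0:ℝ) := by rw [hx]; simp
    have hsplit : ⟪gradient g x + τ • R x, x - z⟫
        = ⟪gradient g x, x - z⟫ + τ * ⟪R x, x - z⟫ := by
      rw [inner_add_left, real_inner_smul_left]
    set a : ℝ := ⟪gradient g x, x - z⟫ with ha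
    set b : ℝ := ⟪R x, x - z⟫ with hb
    set r : ℝ := ‖R x‖ with hr
    have hab : a + τ * b = 0 := by rw [← hsplit]; exact hGz
    have hrb : (1/2 : ℝ) * r^2 ≤ b := hcoco
    have hr0 : (0:ℝ) ≤ r := norm_nonneg _
    have ht1 : τ * (1/2 * r^2) ≤ τ * b := mul_le_mul_of_nonneg_left hrb hτ.le
    have ht2 : τ * b = -a := by linarith
    have ht3 : r^2 ≤ 0 := by nlinarith
    have hrzero : r = 0 := by nlinarith
    have hRx0 : R x = 0 := norm_eq_zero.mp hrzero
    refine ⟨?_, hRx0⟩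
    have hx' := hx
    rw [hRx0] at hx'
    simpa using hx'
  refine ⟨key, ?_⟩
  ext x
  simp only [Set.mem_setOf_eq, Set.mem_inter_iff]
  constructor
  · intro hx; exact key x hx
  · rintro ⟨h1, h2⟩; rw [h1, h2]; simp
end

section
/- If g: ℝⁿ → ℝ is convex and differentiable and ∇g is λ-Lipschitz continuous (λ > 0), then ∇g is (1/λ)-cocoercive: ⟨∇g(x) - ∇g(z), x - z⟩ ≥ (1/λ)‖∇g(x) - ∇g(z)‖² for all x, z ∈ ℝⁿ. -/
open RealInnerProductSpace

variable {n : ℕ}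

lemma bh_hasDerivAt_line (g : EuclideanSpace ℝ (Fin n) → ℝ) (hg : Differentiable ℝ g)
    (a v : EuclideanSpace ℝ (Fin n)) (t : ℝ) :
    HasDerivAt (fun s : ℝ => g (a + s • v)) ⟪gradient g (a + t • v), v⟫ t := by
  have hline : HasDerivAt (fun s : ℝ => a + s • v) v t := by
    simpa using (HasDerivAt.const_add a ((hasDerivAt_id t).smul_const v))
  have hf := ((hg (a + t • v)).hasGradientAt).hasFDerivAt
  have := hf.comp_hasDerivAt t hline
  simpa [InnerProductSpace.toDual_apply_apply, Function.comp_def] using this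

lemma bh_grad_ineq (g : EuclideanSpace ℝ (Fin n) → ℝ) (hg : Differentiable ℝ g)
    (hconv : ConvexOn ℝ Set.univ g) (x y : EuclideanSpace ℝ (Fin n)) :
    g x + ⟪gradient g x, y - x⟫ ≤ g y := by
  set φ : ℝ → ℝ := fun t => g (x + t • (y - x)) with hφ
  have hφconv : ConvexOn ℝ Set.univ φ := by
    have haff : ConvexOn ℝ ((AffineMap.lineMap x y : ℝ →ᵃ[ℝ] _) ⁻¹' Set.univ)
        (g ∘ (AffineMap.lineMap x y : ℝ →ᵃ[ℝ] _)) := hconv.comp_affineMap _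
    have : ((AffineMap.lineMap x y : ℝ →ᵃ[ℝ] _) ⁻¹' Set.univ) = Set.univ := by simp
    rw [this] at haff
    convert haff using 1
    funext t
    simp [φ, AffineMap.lineMap_apply]
    rw [add_comm]
  have hder : HasDerivAt φ ⟪gradient g x, y - x⟫ 0 := by
    have := bh_hasDerivAt_line g hg x (y - x) 0
    simpa using this
  have hslope := hφconv.le_slope_of_hasDerivAt (Set.mem_univ 0) (Set.mem_univ 1)
    one_pos hder
  rw [slope_def_field] at hslope
  have h0 : φ 0 = g x := by simp [φ]
  have h1 : φ 1 = g y := by simp [φ]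
  rw [h0, h1] at hslope
  simp only [sub_zero, div_one] at hslope
  linarith

lemma bh_descent (g : EuclideanSpace ℝ (Fin n) → ℝ) (hg : Differentiable ℝ g)
    (lam : ℝ) (hlam : 0 < lam)
    (hLip : ∀ x z, ‖gradient g x - gradient g z‖ ≤ lam * ‖x - z‖)
    (y z : EuclideanSpace ℝ (Fin n)) :
    g z ≤ g y + ⟪gradient g y, z - y⟫ + lam / 2 * ‖z - y‖ ^ 2 := by
  set v := z - y with hv
  set ψ : ℝ → ℝ := fun t =>
    g (y + t • v) - t * ⟪gradient g y, v⟫ - lam / 2 * t ^ 2 * ‖v‖ ^ 2 with hψ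
  have hψder : ∀ t : ℝ, HasDerivAt ψ
      (⟪gradient g (y + t • v), v⟫ - ⟪gradient g y, v⟫ - lam * t * ‖v‖ ^ 2) t := by
    intro t
    have h1 := bh_hasDerivAt_line g hg y v t
    have h2 : HasDerivAt (fun t : ℝ => t * ⟪gradient g y, v⟫) ⟪gradient g y, v⟫ t := by
      simpa using (hasDerivAt_id t).mul_const ⟪gradient g y, v⟫
    have h3 : HasDerivAt (fun t : ℝ => lam / 2 * t ^ 2 * ‖v‖ ^ 2)
        (lam * t * ‖v‖ ^ 2) t := by
      have : HasDerivAt (fun t : ℝ => t ^ 2) (2 * t) t := by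
        simpa using hasDerivAt_pow 2 t
      have := ((this.const_mul (lam / 2)).mul_const (‖v‖ ^ 2))
      refine this.congr_deriv ?_
      ring
    exact (h1.sub h2).sub h3
  have hψdiff : Differentiable ℝ ψ := fun t => (hψder t).differentiableAt
  have hnonpos : ∀ t ∈ Set.Ioo (0:ℝ) 1, deriv ψ t ≤ 0 := by
    intro t ht
    rw [(hψder t).deriv]
    have key : ⟪gradient g (y + t • v) - gradient g y, v⟫ ≤ lam * t * ‖v‖ ^ 2 := by
      calc ⟪gradient g (y + t • v) - gradient g y, v⟫
          ≤ ‖gradient g (y + t • v) - gradient g y‖ * ‖v‖ := real_inner_le_norm _ _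
        _ ≤ (lam * ‖(y + t • v) - y‖) * ‖v‖ := by
            gcongr; exact hLip _ _
        _ = lam * t * ‖v‖ ^ 2 := by
            have : ‖(y + t • v) - y‖ = t * ‖v‖ := by
              simp [norm_smul, abs_of_pos ht.1]
            rw [this]; ring
    rw [inner_sub_left] at key
    linarith
  have hanti : AntitoneOn ψ (Set.Icc 0 1) :=
    antitoneOn_of_deriv_nonpos (convex_Icc 0 1) hψdiff.continuous.continuousOn
      (hψdiff.differentiableOn.mono interior_subset)
      (by simpa using hnonpos)
  have := hanti (Set.left_mem_Icc.mpr zero_le_one) (Set.right_mem_Icc.mpr zero_le_one)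
    zero_le_one
  have h0 : ψ 0 = g y := by simp [ψ]
  have h1 : ψ 1 = g z - ⟪gradient g y, v⟫ - lam / 2 * ‖v‖ ^ 2 := by
    have hz : y + (1:ℝ) • v = z := by simp [hv]
    simp only [ψ, hz, one_pow, one_mul, mul_one]
  rw [h0, h1] at this
  linarith

lemma bh_key (g : EuclideanSpace ℝ (Fin n) → ℝ) (hg : Differentiable ℝ g)
    (hconv : ConvexOn ℝ Set.univ g) (lam : ℝ) (hlam : 0 < lam)
    (hLip : ∀ x z, ‖gradient g x - gradient g z‖ ≤ lam * ‖x - z‖)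
    (x z : EuclideanSpace ℝ (Fin n)) :
    g x + ⟪gradient g x, z - x⟫ + 1 / (2 * lam) * ‖gradient g z - gradient g x‖ ^ 2
      ≤ g z := by
  set u := gradient g z - gradient g x with hu
  set w := z - (1 / lam) • u with hw
  have h1 := bh_grad_ineq g hg hconv x w
  have h2 := bh_descent g hg lam hlam hLip z w
  have hwz : w - z = -((1 / lam) • u) := by rw [hw]; abel
  have hnorm : ‖w - z‖ ^ 2 = (1 / lam) ^ 2 * ‖u‖ ^ 2 := by
    rw [hwz, norm_neg, norm_smul, mul_pow]
    congr 1
    rw [Real.norm_eq_abs, abs_of_pos (by positivity)]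
  have hinner1 : ⟪gradient g x, w - x⟫ = ⟪gradient g x, z - x⟫ + ⟪gradient g x, w - z⟫ := by
    rw [← inner_add_right]
    congr 1
    abel
  have hinner2 : ⟪gradient g z, w - z⟫ = ⟪gradient g x, w - z⟫ + ⟪u, w - z⟫ := by
    rw [← inner_add_left, hu]
    congr 1
    abel
  have hinner3 : ⟪u, w - z⟫ = -(1 / lam) * ‖u‖ ^ 2 := by
    rw [hwz, inner_neg_right, real_inner_smul_right, real_inner_self_eq_norm_sq]
    try ring
  rw [hinner1] at h1
  rw [hinner2, hinner3, hnorm] at h2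
  have hl : lam / 2 * ((1 / lam) ^ 2 * ‖u‖ ^ 2) = 1 / (2 * lam) * ‖u‖ ^ 2 := by
    field_simp
    try ring
    try ring
  rw [hl] at h2
  have hcomb : -(1 / lam) * ‖u‖ ^ 2 + 1 / (2 * lam) * ‖u‖ ^ 2
      = -(1 / (2 * lam) * ‖u‖ ^ 2) := by
    field_simp
    try ring
    try ring
  linarith

/-- Baillon–Haddad: a convex differentiable function with `λ`-Lipschitz gradient has a
`(1/λ)`-cocoercive gradient. -/
theorem baillon_haddad_cocoercive {n : ℕ}
    (g : EuclideanSpace ℝ (Fin n) → ℝ) (hg : Differentiable ℝ g)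
    (hconv : ConvexOn ℝ Set.univ g)
    (lam : ℝ) (hlam : 0 < lam)
    (hLip : ∀ x z, ‖gradient g x - gradient g z‖ ≤ lam * ‖x - z‖) :
    ∀ x z, ⟪gradient g x - gradient g z, x - z⟫ ≥
      (1 / lam) * ‖gradient g x - gradient g z‖ ^ 2 := by
  intro x z
  have h1 := bh_key g hg hconv lam hlam hLip x z
  have h2 := bh_key g hg hconv lam hlam hLip z x
  have hn : ‖gradient g z - gradient g x‖ = ‖gradient g x - gradient g z‖ :=
    norm_sub_rev _ _
  rw [hn] at h1
  have hsplit : ⟪gradient g x - gradient g z, x - z⟫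
      = -⟪gradient g x, z - x⟫ - ⟪gradient g z, x - z⟫ := by
    rw [inner_sub_left]
    have e1 : ⟪gradient g x, x - z⟫ = -⟪gradient g x, z - x⟫ := by
      rw [← inner_neg_right]; congr 1; abel
    rw [e1]
    try ring
  rw [hsplit]
  have : 1 / lam * ‖gradient g x - gradient g z‖ ^ 2
      = 2 * (1 / (2 * lam) * ‖gradient g x - gradient g z‖ ^ 2) := by
    field_simp
    try ring
  linarith
end

section
/- Let A ∈ ℝ^{m×n} satisfy S-REC with constant μ > 0 over a set containing x̄ and x̂, let y = Ax* + e for some x* ∈ ℝⁿ and e ∈ ℝᵐ, and suppose ‖y - Ax̄‖ ≤ ‖y - Ax̂‖ + η for some η ≥ 0. Then ‖x̄ - x̂‖ ≤ (2/√μ)‖A(x* - x̂)‖ + (2/√μ)‖e‖ + η/√μ. -/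
open RealInnerProductSpace

/-- Recovery bound from S-REC and near-optimal data fidelity. -/
theorem srec_recovery_bound {m n : ℕ}
    (A : Matrix (Fin m) (Fin n) ℝ) (μ : ℝ) (hμ : 0 < μ)
    (X : Set (EuclideanSpace ℝ (Fin n)))
    (xbar xhat : EuclideanSpace ℝ (Fin n)) (hxbar : xbar ∈ X) (hxhat : xhat ∈ X)
    (hSREC : ∀ x ∈ X, ∀ z ∈ X,
      ‖Matrix.toEuclideanLin A x - Matrix.toEuclideanLin A z‖ ^ 2 ≥ μ * ‖x - z‖ ^ 2)
    (xstar : EuclideanSpace ℝ (Fin n)) (e y : EuclideanSpace ℝ (Fin m))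
    (hy : y = Matrix.toEuclideanLin A xstar + e)
    (η : ℝ) (hη : 0 ≤ η)
    (hbound : ‖y - Matrix.toEuclideanLin A xbar‖ ≤
      ‖y - Matrix.toEuclideanLin A xhat‖ + η) :
    ‖xbar - xhat‖ ≤ (2 / Real.sqrt μ) * ‖Matrix.toEuclideanLin A (xstar - xhat)‖
      + (2 / Real.sqrt μ) * ‖e‖ + η / Real.sqrt μ := by
  set T := Matrix.toEuclideanLin A
  have hs : 0 < Real.sqrt μ := Real.sqrt_pos.mpr hμ
  -- step 1: √μ ‖xbar - xhat‖ ≤ ‖T xbar - T xhat‖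
  have h1 : Real.sqrt μ * ‖xbar - xhat‖ ≤ ‖T xbar - T xhat‖ := by
    have h := hSREC xbar hxbar xhat hxhat
    nlinarith [norm_nonneg (xbar - xhat), norm_nonneg (T xbar - T xhat),
      Real.sq_sqrt hμ.le, Real.sqrt_nonneg μ, mul_nonneg hs.le (norm_nonneg (xbar - xhat))]
  -- step 2: triangle
  have h2 : ‖T xbar - T xhat‖ ≤ ‖y - T xbar‖ + ‖y - T xhat‖ := by
    have : T xbar - T xhat = (y - T xhat) - (y - T xbar) := by abel
    rw [this]
    calc ‖(y - T xhat) - (y - T xbar)‖ ≤ ‖y - T xhat‖ + ‖y - T xbar‖ := norm_sub_le _ _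
      _ = ‖y - T xbar‖ + ‖y - T xhat‖ := by ring
  -- step 3: ‖y - T xhat‖ ≤ ‖T (xstar - xhat)‖ + ‖e‖
  have h3 : ‖y - T xhat‖ ≤ ‖T (xstar - xhat)‖ + ‖e‖ := by
    have : y - T xhat = T (xstar - xhat) + e := by
      rw [hy, map_sub]; abel
    rw [this]; exact norm_add_le _ _
  have key : Real.sqrt μ * ‖xbar - xhat‖ ≤ 2 * ‖T (xstar - xhat)‖ + 2 * ‖e‖ + η := by
    linarith
  rw [div_mul_eq_mul_div, div_mul_eq_mul_div, ← add_div, ← add_div,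
    le_div_iff₀ hs, mul_comm]
  linarith
end
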